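/- New double series identity (case i = 0 of Theorem results (2.3)/(2.4)): if (Δ_m) is a bounded sequence of complex numbers, ρ ∈ ℂ with ρ and 2−ρ not nonpositive integers (and the parameters below not nonpositive integers), then for all x ∈ ℂ: ∑_{m=0}^{∞} ∑_{n=0}^{∞} (−1)^n Δ_{m+n} x^{m+n} / ((ρ)_m (2−ρ)_n m! n!) = ∑_{m=0}^{∞} Δ_{2m} (−x²)^m / ( (1/2)_m ((ρ+1)/2)_m ((3−ρ)/2)_m 4^m m! ) + (2(1−ρ)x/(ρ(2−ρ))) ∑_{m=0}^{∞} Δ_{2m+1} (−x²)^m / ( (3/2)_m (ρ/2+1)_m (2−ρ/2)_m 4^m m! ). -/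

import Mathlib

noncomputable def poch (a : ℂ) (n : ℕ) : ℂ := (ascPochhammer ℂ n).eval a

lemma poch_zero (a : ℂ) : poch a 0 = 1 := by simp [poch]

lemma poch_succ (a : ℂ) (n : ℕ) : poch a (n+1) = poch a n * (a + n) := by
  simp [poch, ascPochhammer_succ_eval]

lemma poch_ne_zero {a : ℂ} (h : ∀ k : ℕ, a ≠ -(k:ℂ)) : ∀ n, poch a n ≠ 0
  | 0 => by simp [poch_zero]
  | (n+1) => by
      rw [poch_succ]
      refine mul_ne_zero (poch_ne_zero h n) (fun hc => h n ?_)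
      linear_combination hc

noncomputable def tt (ρ : ℂ) (m n : ℕ) : ℂ :=
  (-1)^n / (poch ρ m * poch (2-ρ) n * m.factorial * n.factorial)

noncomputable def cdiag (ρ : ℂ) (N : ℕ) : ℂ := ∑ p ∈ Finset.HasAntidiagonal.antidiagonal N, tt ρ p.1 p.2

def Wpoly (r m n : ℂ) : ℂ :=
  (-4 + 4*r + 4*r^2 - 4*r^3)
  + (6 - 17*r + 8*r^2 + 3*r^3) * n
  + (5 + 3*r - 8*r^2) * n^2
  + (-5 + 5*r) * n^3
  + (8 - 7*r - 2*r^2 + r^3) * m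
  + (-6 + 16*r - 2*r^2) * m*n
  + (-9 - 4*r) * m*n^2
  + 5 * m*n^3
  + (-5 + 5*r) * m^2
  + (-1 - 4*r) * m^2*n
  + 4 * m^2*n^2
  + (1 - r) * m^3
  + m^3*n

noncomputable def gg (ρ : ℂ) (m n : ℕ) : ℂ :=
  (-1)^n * ((m:ℂ) * n * Wpoly ρ m n) / (poch ρ m * poch (2-ρ) n * m.factorial * n.factorial)

set_option maxHeartbeats 1000000 in
lemma key (ρ : ℂ) (hρ : ∀ k : ℕ, ρ ≠ -(k:ℂ)) (hρ' : ∀ k : ℕ, 2 - ρ ≠ -(k:ℂ)) (m n : ℕ) :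
    gg ρ (m+1) n - gg ρ m (n+1)
      = (((m:ℂ)+n-1)*((m:ℂ)+n)*(ρ+(m:ℂ)+n-1)*((m:ℂ)+(n:ℂ)+1-ρ)
          + 4*((n:ℂ)-ρ)*((n:ℂ)+1-ρ)*((n:ℂ)-1)*(n:ℂ)) * tt ρ m n := by
  have ha := poch_ne_zero hρ m
  have hb := poch_ne_zero hρ' n
  have ham : (ρ + (m:ℂ)) ≠ 0 := fun hc => hρ m (by linear_combination hc)
  have hbn : (2 - ρ + (n:ℂ)) ≠ 0 := fun hc => hρ' n (by linear_combination hc)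
  have hfm : ((m.factorial : ℂ)) ≠ 0 := Nat.cast_ne_zero.2 m.factorial_ne_zero
  have hfn : ((n.factorial : ℂ)) ≠ 0 := Nat.cast_ne_zero.2 n.factorial_ne_zero
  have hm1 : ((m:ℂ) + 1) ≠ 0 := by
    have : ((m+1 : ℕ):ℂ) ≠ 0 := Nat.cast_ne_zero.2 (Nat.succ_ne_zero m)
    push_cast at this; exact this
  have hn1 : ((n:ℂ) + 1) ≠ 0 := by
    have : ((n+1 : ℕ):ℂ) ≠ 0 := Nat.cast_ne_zero.2 (Nat.succ_ne_zero n)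
    push_cast at this; exact this
  have hD : poch ρ m * poch (2-ρ) n * (m.factorial:ℂ) * (n.factorial:ℂ)
      * (ρ+(m:ℂ)) * (2-ρ+(n:ℂ)) * ((m:ℂ)+1) * ((n:ℂ)+1) ≠ 0 := by
    exact mul_ne_zero (mul_ne_zero (mul_ne_zero (mul_ne_zero (mul_ne_zero (mul_ne_zero
      (mul_ne_zero ha hb) hfm) hfn) ham) hbn) hm1) hn1
  have e1 : gg ρ (m+1) n
      = ((-1:ℂ)^n * (((m:ℂ)+1) * n * Wpoly ρ ((m:ℂ)+1) n) * ((2-ρ+(n:ℂ))*((n:ℂ)+1)))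
        / (poch ρ m * poch (2-ρ) n * (m.factorial:ℂ) * (n.factorial:ℂ)
            * (ρ+(m:ℂ)) * (2-ρ+(n:ℂ)) * ((m:ℂ)+1) * ((n:ℂ)+1)) := by
    rw [gg, poch_succ, Nat.factorial_succ]
    push_cast
    rw [div_eq_div_iff (by
      exact mul_ne_zero (mul_ne_zero (mul_ne_zero (mul_ne_zero ha ham) hb)
        (mul_ne_zero hm1 hfm)) hfn) hD]
    ring
  have e2 : gg ρ m (n+1)
      = (-((-1:ℂ)^n) * ((m:ℂ) * ((n:ℂ)+1) * Wpoly ρ m ((n:ℂ)+1)) * ((ρ+(m:ℂ))*((m:ℂ)+1)))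
        / (poch ρ m * poch (2-ρ) n * (m.factorial:ℂ) * (n.factorial:ℂ)
            * (ρ+(m:ℂ)) * (2-ρ+(n:ℂ)) * ((m:ℂ)+1) * ((n:ℂ)+1)) := by
    rw [gg, poch_succ, Nat.factorial_succ, pow_succ]
    push_cast
    rw [div_eq_div_iff (by
      exact mul_ne_zero (mul_ne_zero (mul_ne_zero ha (mul_ne_zero hb hbn)) hfm)
        (mul_ne_zero hn1 hfn)) hD]
    ring
  have e3 : tt ρ m n
      = ((-1:ℂ)^n * ((ρ+(m:ℂ))*(2-ρ+(n:ℂ))*((m:ℂ)+1)*((n:ℂ)+1)))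
        / (poch ρ m * poch (2-ρ) n * (m.factorial:ℂ) * (n.factorial:ℂ)
            * (ρ+(m:ℂ)) * (2-ρ+(n:ℂ)) * ((m:ℂ)+1) * ((n:ℂ)+1)) := by
    rw [tt]
    rw [div_eq_div_iff (by
      exact mul_ne_zero (mul_ne_zero (mul_ne_zero ha hb) hfm) hfn) hD]
    ring
  rw [e1, e2, e3, div_sub_div_same, mul_div_assoc']
  congr 1
  simp only [Wpoly]
  ring


lemma extra_tt (ρ : ℂ) (hρ : ∀ k : ℕ, ρ ≠ -(k:ℂ)) (hρ' : ∀ k : ℕ, 2 - ρ ≠ -(k:ℂ)) (m k : ℕ) :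
    ((k:ℂ)+2-ρ)*((k:ℂ)+3-ρ)*((k:ℂ)+1)*((k:ℂ)+2) * tt ρ m (k+2) = tt ρ m k := by
  have ha := poch_ne_zero hρ m
  have hb := poch_ne_zero hρ' k
  have hb1 : (2 - ρ + (k:ℂ)) ≠ 0 := fun hc => hρ' k (by linear_combination hc)
  have hb2 : (2 - ρ + ((k:ℂ)+1)) ≠ 0 := fun hc => hρ' (k+1) (by push_cast; linear_combination hc)
  have hfm : ((m.factorial : ℂ)) ≠ 0 := Nat.cast_ne_zero.2 m.factorial_ne_zero
  have hfk : ((k.factorial : ℂ)) ≠ 0 := Nat.cast_ne_zero.2 k.factorial_ne_zero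
  have hk1 : ((k:ℂ) + 1) ≠ 0 := by
    have : ((k+1 : ℕ):ℂ) ≠ 0 := Nat.cast_ne_zero.2 (Nat.succ_ne_zero k)
    push_cast at this; exact this
  have hk2 : ((k:ℂ) + 2) ≠ 0 := by
    have : ((k+2 : ℕ):ℂ) ≠ 0 := Nat.cast_ne_zero.2 (by omega)
    push_cast at this; exact this
  have hB : poch ρ m * poch (2-ρ) k * (m.factorial:ℂ) * (k.factorial:ℂ) ≠ 0 :=
    mul_ne_zero (mul_ne_zero (mul_ne_zero ha hb) hfm) hfk
  have hD : poch ρ m * poch (2-ρ) k * (m.factorial:ℂ) * (k.factorial:ℂ)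
      * ((2-ρ+(k:ℂ)) * (2-ρ+((k:ℂ)+1)) * ((k:ℂ)+1) * ((k:ℂ)+2)) ≠ 0 :=
    mul_ne_zero hB (mul_ne_zero (mul_ne_zero (mul_ne_zero hb1 hb2) hk1) hk2)
  have h22 : k + 2 = (k+1)+1 := rfl
  have e1 : tt ρ m (k+2) = ((-1:ℂ)^k)
      / (poch ρ m * poch (2-ρ) k * (m.factorial:ℂ) * (k.factorial:ℂ)
          * ((2-ρ+(k:ℂ)) * (2-ρ+((k:ℂ)+1)) * ((k:ℂ)+1) * ((k:ℂ)+2))) := by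
    rw [tt, h22]
    simp only [poch_succ, Nat.factorial_succ, pow_succ]
    push_cast
    rw [div_eq_div_iff (by
      refine mul_ne_zero (mul_ne_zero (mul_ne_zero ha ?_) hfm) ?_
      · exact mul_ne_zero (mul_ne_zero hb hb1) hb2
      · exact mul_ne_zero (fun hc => hk2 (by linear_combination hc)) (mul_ne_zero hk1 hfk)) hD]
    ring
  rw [e1, tt, mul_div_assoc', div_eq_div_iff hD hB]
  ring

set_option maxHeartbeats 1000000 in
lemma cdiag_rec (ρ : ℂ) (hρ : ∀ k : ℕ, ρ ≠ -(k:ℂ)) (hρ' : ∀ k : ℕ, 2 - ρ ≠ -(k:ℂ)) (N : ℕ) :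
    ((N:ℂ)+1)*((N:ℂ)+2)*(ρ+(N:ℂ)+1)*((N:ℂ)+3-ρ) * cdiag ρ (N+2) + 4 * cdiag ρ N = 0 := by
  have h2 : cdiag ρ (N+2) = ∑ m ∈ Finset.range (N+3), tt ρ m (N+2-m) :=
    Finset.Nat.sum_antidiagonal_eq_sum_range_succ_mk _ _
  have h0 : cdiag ρ N = ∑ m ∈ Finset.range (N+1), tt ρ m (N-m) :=
    Finset.Nat.sum_antidiagonal_eq_sum_range_succ_mk _ _
  have hsplit : ∑ m ∈ Finset.range (N+3), (if m ≤ N then 4 * tt ρ m (N-m) else 0)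
      = 4 * cdiag ρ N := by
    rw [h0, Finset.mul_sum]
    rw [← Finset.sum_subset (Finset.range_subset_range.2 (by omega : N+1 ≤ N+3))
      (fun m hm hm' => if_neg (by simp only [Finset.mem_range] at hm hm'; omega))]
    exact Finset.sum_congr rfl fun m hm =>
      if_pos (by simp only [Finset.mem_range] at hm; omega)
  have tele : ∀ m ∈ Finset.range (N+3),
      ((N:ℂ)+1)*((N:ℂ)+2)*(ρ+(N:ℂ)+1)*((N:ℂ)+3-ρ) * tt ρ m (N+2-m)
        + (if m ≤ N then 4 * tt ρ m (N-m) else 0)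
      = gg ρ (m+1) (N+3-(m+1)) - gg ρ m (N+3-m) := by
    intro m hm
    rw [Finset.mem_range] at hm
    have h31 : N + 3 - (m+1) = N + 2 - m := by omega
    have h3 : N + 3 - m = (N + 2 - m) + 1 := by omega
    rw [h31, h3, key ρ hρ hρ' m (N+2-m)]
    have hcast : ((N + 2 - m : ℕ):ℂ) = (N:ℂ) + 2 - (m:ℂ) := by
      have h := congrArg (Nat.cast : ℕ → ℂ) (show m + (N + 2 - m) = N + 2 by omega)
      push_cast at h; linear_combination h
    have hextra : (if m ≤ N then 4 * tt ρ m (N-m) else 0)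
        = 4*(((N+2-m : ℕ):ℂ)-ρ)*(((N+2-m : ℕ):ℂ)+1-ρ)*(((N+2-m : ℕ):ℂ)-1)*((N+2-m : ℕ):ℂ)
            * tt ρ m (N+2-m) := by
      by_cases hmN : m ≤ N
      · rw [if_pos hmN]
        obtain ⟨k, rfl⟩ : ∃ k, N = m + k := ⟨N - m, by omega⟩
        have e1 : m + k - m = k := by omega
        have e2 : m + k + 2 - m = k + 2 := by omega
        rw [e1, e2]
        have hc : ((k+2 : ℕ):ℂ) = (k:ℂ)+2 := by push_cast; ring
        rw [hc]
        linear_combination (-4 : ℂ) * extra_tt ρ hρ hρ' m k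
      · rw [if_neg hmN]
        have : N + 2 - m = 0 ∨ N + 2 - m = 1 := by omega
        rcases this with h | h <;> rw [h] <;> push_cast <;> ring
    rw [hextra, hcast]
    ring
  calc ((N:ℂ)+1)*((N:ℂ)+2)*(ρ+(N:ℂ)+1)*((N:ℂ)+3-ρ) * cdiag ρ (N+2) + 4 * cdiag ρ N
      = ∑ m ∈ Finset.range (N+3),
          (((N:ℂ)+1)*((N:ℂ)+2)*(ρ+(N:ℂ)+1)*((N:ℂ)+3-ρ) * tt ρ m (N+2-m)
            + if m ≤ N then 4 * tt ρ m (N-m) else 0) := by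
        rw [Finset.sum_add_distrib, ← Finset.mul_sum, ← h2, hsplit]
    _ = ∑ m ∈ Finset.range (N+3),
          ((fun m => gg ρ m (N+3-m)) (m+1) - (fun m => gg ρ m (N+3-m)) m) :=
        Finset.sum_congr rfl tele
    _ = (fun m => gg ρ m (N+3-m)) (N+3) - (fun m => gg ρ m (N+3-m)) 0 :=
        Finset.sum_range_sub (fun m => gg ρ m (N+3-m)) (N+3)
    _ = 0 := by norm_num [gg]

noncomputable def Eterm (ρ : ℂ) (k : ℕ) : ℂ :=
  (-1)^k / (poch (1/2) k * poch ((ρ+1)/2) k * poch ((3-ρ)/2) k * 4^k * k.factorial)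

noncomputable def Oterm (ρ : ℂ) (k : ℕ) : ℂ :=
  (2*(1-ρ)/(ρ*(2-ρ))) *
    ((-1)^k / (poch (3/2) k * poch (ρ/2+1) k * poch (2-ρ/2) k * 4^k * k.factorial))

lemma ne_neg_nat_of_re_pos {a : ℂ} (ha : 0 < a.re) (k : ℕ) : a ≠ -(k:ℂ) := by
  intro h
  have h2 := congrArg Complex.re h
  simp only [Complex.neg_re, Complex.natCast_re] at h2
  have h3 : (0:ℝ) ≤ (k:ℝ) := Nat.cast_nonneg k
  linarith

lemma half_pos_re : (0:ℝ) < ((1/2 : ℂ)).re := by norm_num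
lemma three_half_pos_re : (0:ℝ) < ((3/2 : ℂ)).re := by norm_num

lemma cdiag_zero (ρ : ℂ) : cdiag ρ 0 = 1 := by
  simp [cdiag, tt, poch_zero]

lemma cdiag_one (ρ : ℂ) (hρ0 : ρ ≠ 0) (hρ2 : 2 - ρ ≠ 0) : cdiag ρ 1 = Oterm ρ 0 := by
  have h : cdiag ρ 1 = ∑ m ∈ Finset.range 2, tt ρ m (1-m) :=
    Finset.Nat.sum_antidiagonal_eq_sum_range_succ_mk _ _
  rw [h, Finset.sum_range_succ, Finset.sum_range_one]
  simp only [Nat.sub_self, Nat.sub_zero, tt, Oterm, poch_zero, poch_succ]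
  push_cast
  simp only [add_zero]
  field_simp
  ring

set_option maxHeartbeats 1000000 in
lemma closed_form (ρ : ℂ) (hρ : ∀ k : ℕ, ρ ≠ -(k:ℂ)) (hρ' : ∀ k : ℕ, 2 - ρ ≠ -(k:ℂ))
    (h1 : ∀ k : ℕ, (ρ + 1) / 2 ≠ -(k : ℂ)) (h2 : ∀ k : ℕ, (3 - ρ) / 2 ≠ -(k : ℂ))
    (h3 : ∀ k : ℕ, ρ / 2 + 1 ≠ -(k : ℂ)) (h4 : ∀ k : ℕ, 2 - ρ / 2 ≠ -(k : ℂ)) :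
    ∀ k : ℕ, cdiag ρ (2*k) = Eterm ρ k ∧ cdiag ρ (2*k+1) = Oterm ρ k := by
  have hρ0 : ρ ≠ 0 := by simpa using hρ 0
  have hρ2 : 2 - ρ ≠ 0 := by simpa using hρ' 0
  intro k
  induction k with
  | zero =>
    constructor
    · simpa [Eterm, poch_zero] using cdiag_zero ρ
    · simpa using cdiag_one ρ hρ0 hρ2
  | succ k ih =>
    have hfour : (4:ℂ) ≠ 0 := by norm_num
    have h4k : ((4:ℂ))^k ≠ 0 := pow_ne_zero _ hfour
    have hfk : ((k.factorial : ℂ)) ≠ 0 := Nat.cast_ne_zero.2 k.factorial_ne_zero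
    have hk1 : ((k:ℂ) + 1) ≠ 0 := by
      intro hc
      exact Nat.cast_ne_zero.2 (Nat.succ_ne_zero k)
        (show ((k+1:ℕ):ℂ) = 0 by push_cast; linear_combination hc)
    constructor
    · -- even
      have hP1 := poch_ne_zero (ne_neg_nat_of_re_pos half_pos_re) k
      have hP2 := poch_ne_zero h1 k
      have hP3 := poch_ne_zero h2 k
      have hQ1 : ((1:ℂ)/2 + k) ≠ 0 := fun hc =>
        (ne_neg_nat_of_re_pos half_pos_re k) (by linear_combination hc)
      have hQ2 : ((ρ+1)/2 + k) ≠ 0 := fun hc => h1 k (by linear_combination hc)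
      have hQ3 : ((3-ρ)/2 + k) ≠ 0 := fun hc => h2 k (by linear_combination hc)
      have hA1 : (2*(k:ℂ)+1) ≠ 0 := fun hc =>
        Nat.cast_ne_zero.2 (show 2*k+1 ≠ 0 by omega)
          (show ((2*k+1:ℕ):ℂ) = 0 by push_cast; linear_combination hc)
      have hA2 : (2*(k:ℂ)+2) ≠ 0 := fun hc =>
        Nat.cast_ne_zero.2 (show 2*k+2 ≠ 0 by omega)
          (show ((2*k+2:ℕ):ℂ) = 0 by push_cast; linear_combination hc)
      have hA3 : (ρ+2*(k:ℂ)+1) ≠ 0 := fun hc => hρ (2*k+1) (by push_cast; linear_combination hc)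
      have hA4 : (2*(k:ℂ)+3-ρ) ≠ 0 := fun hc => hρ' (2*k+1) (by push_cast; linear_combination hc)
      have hA : (2*(k:ℂ)+1)*(2*(k:ℂ)+2)*(ρ+2*(k:ℂ)+1)*(2*(k:ℂ)+3-ρ) ≠ 0 :=
        mul_ne_zero (mul_ne_zero (mul_ne_zero hA1 hA2) hA3) hA4
      have hD : poch (1/2) k * poch ((ρ+1)/2) k * poch ((3-ρ)/2) k * (4:ℂ)^k
          * (k.factorial:ℂ) ≠ 0 := by
        apply_rules [mul_ne_zero]
      have hD1 : (poch (1/2) k * poch ((ρ+1)/2) k * poch ((3-ρ)/2) k * (4:ℂ)^k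
            * (k.factorial:ℂ))
          * (((1:ℂ)/2+(k:ℂ))*((ρ+1)/2+(k:ℂ))*((3-ρ)/2+(k:ℂ))*4*((k:ℂ)+1)) ≠ 0 := by
        apply_rules [mul_ne_zero]
      have hE := cdiag_rec ρ hρ hρ' (2*k)
      push_cast at hE
      have hc2 : cdiag ρ (2*k+2)
          = -(4 * Eterm ρ k) / ((2*(k:ℂ)+1)*(2*(k:ℂ)+2)*(ρ+2*(k:ℂ)+1)*(2*(k:ℂ)+3-ρ)) := by
        rw [eq_div_iff hA]
        linear_combination hE - 4 * ih.1
      have e1 : Eterm ρ (k+1)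
          = (-(-1:ℂ)^k)
            / ((poch (1/2) k * poch ((ρ+1)/2) k * poch ((3-ρ)/2) k * (4:ℂ)^k
                * (k.factorial:ℂ))
              * (((1:ℂ)/2+(k:ℂ))*((ρ+1)/2+(k:ℂ))*((3-ρ)/2+(k:ℂ))*4*((k:ℂ)+1))) := by
        rw [Eterm]
        simp only [poch_succ, pow_succ, Nat.factorial_succ]
        push_cast
        rw [div_eq_div_iff (by apply_rules [mul_ne_zero]) hD1]
        ring
      rw [show 2*(k+1) = 2*k+2 by omega, hc2, e1, div_eq_div_iff hA hD1]
      simp only [Eterm]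
      field_simp
      ring
    · -- odd
      have hP1 := poch_ne_zero (ne_neg_nat_of_re_pos three_half_pos_re) k
      have hP2 := poch_ne_zero h3 k
      have hP3 := poch_ne_zero h4 k
      have hQ1 : ((3:ℂ)/2 + k) ≠ 0 := fun hc =>
        (ne_neg_nat_of_re_pos three_half_pos_re k) (by linear_combination hc)
      have hQ2 : (ρ/2+1 + (k:ℂ)) ≠ 0 := fun hc => h3 k (by linear_combination hc)
      have hQ3 : (2-ρ/2 + (k:ℂ)) ≠ 0 := fun hc => h4 k (by linear_combination hc)
      have hA1 : (2*(k:ℂ)+2) ≠ 0 := fun hc =>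
        Nat.cast_ne_zero.2 (show 2*k+2 ≠ 0 by omega)
          (show ((2*k+2:ℕ):ℂ) = 0 by push_cast; linear_combination hc)
      have hA2 : (2*(k:ℂ)+3) ≠ 0 := fun hc =>
        Nat.cast_ne_zero.2 (show 2*k+3 ≠ 0 by omega)
          (show ((2*k+3:ℕ):ℂ) = 0 by push_cast; linear_combination hc)
      have hA3 : (ρ+2*(k:ℂ)+2) ≠ 0 := fun hc => hρ (2*k+2) (by push_cast; linear_combination hc)
      have hA4 : (2*(k:ℂ)+4-ρ) ≠ 0 := fun hc => hρ' (2*k+2) (by push_cast; linear_combination hc)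
      have hA : (2*(k:ℂ)+2)*(2*(k:ℂ)+3)*(ρ+2*(k:ℂ)+2)*(2*(k:ℂ)+4-ρ) ≠ 0 :=
        mul_ne_zero (mul_ne_zero (mul_ne_zero hA1 hA2) hA3) hA4
      have hD : poch (3/2) k * poch (ρ/2+1) k * poch (2-ρ/2) k * (4:ℂ)^k
          * (k.factorial:ℂ) ≠ 0 := by
        apply_rules [mul_ne_zero]
      have hD1 : (poch (3/2) k * poch (ρ/2+1) k * poch (2-ρ/2) k * (4:ℂ)^k
            * (k.factorial:ℂ))
          * (((3:ℂ)/2+(k:ℂ))*(ρ/2+1+(k:ℂ))*(2-ρ/2+(k:ℂ))*4*((k:ℂ)+1)) ≠ 0 := by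
        apply_rules [mul_ne_zero]
      have hO := cdiag_rec ρ hρ hρ' (2*k+1)
      push_cast at hO
      have hc2 : cdiag ρ (2*k+1+2)
          = -(4 * Oterm ρ k) / ((2*(k:ℂ)+2)*(2*(k:ℂ)+3)*(ρ+2*(k:ℂ)+2)*(2*(k:ℂ)+4-ρ)) := by
        rw [eq_div_iff hA]
        linear_combination hO - 4 * ih.2
      have e1 : Oterm ρ (k+1)
          = ((2*(1-ρ)/(ρ*(2-ρ))) * (-(-1:ℂ)^k))
            / ((poch (3/2) k * poch (ρ/2+1) k * poch (2-ρ/2) k * (4:ℂ)^k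
                * (k.factorial:ℂ))
              * (((3:ℂ)/2+(k:ℂ))*(ρ/2+1+(k:ℂ))*(2-ρ/2+(k:ℂ))*4*((k:ℂ)+1))) := by
        rw [Oterm]
        simp only [poch_succ, pow_succ, Nat.factorial_succ]
        push_cast
        rw [mul_div_assoc']
        rw [div_eq_div_iff (by apply_rules [mul_ne_zero]) hD1]
        ring
      have hcan : ((-1:ℂ)^k / (poch (3/2) k * poch (ρ/2+1) k * poch (2-ρ/2) k * (4:ℂ)^k
            * (k.factorial:ℂ))) * (poch (3/2) k * poch (ρ/2+1) k * poch (2-ρ/2) k * (4:ℂ)^k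
            * (k.factorial:ℂ)) = (-1:ℂ)^k := div_mul_cancel₀ _ hD
      rw [show 2*(k+1)+1 = 2*k+1+2 by omega, hc2, e1, div_eq_div_iff hA hD1]
      simp only [Oterm]
      linear_combination (-(4 * (2*(1-ρ)/(ρ*(2-ρ)))
        * (((3:ℂ)/2+(k:ℂ))*(ρ/2+1+(k:ℂ))*(2-ρ/2+(k:ℂ))*4*((k:ℂ)+1)))) * hcan

lemma poch_norm_lb {a : ℂ} (h : ∀ k : ℕ, a ≠ -(k:ℂ)) :
    ∃ c : ℝ, 0 < c ∧ ∀ n : ℕ, c ^ n ≤ ‖poch a n‖ := by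
  obtain ⟨K, hK⟩ := exists_nat_gt (‖a‖ + 1)
  have hak : ∀ k : ℕ, (a + (k:ℂ)) ≠ 0 := fun k hk => h k (by linear_combination hk)
  set c : ℝ := min 1 ((Finset.range (K+1)).inf' (by simp) (fun k => ‖a + (k:ℂ)‖)) with hc
  have hcpos : 0 < c := by
    refine lt_min one_pos ?_
    rw [Finset.lt_inf'_iff]
    exact fun k _ => norm_pos_iff.2 (hak k)
  have hstep : ∀ k : ℕ, c ≤ ‖a + (k:ℂ)‖ := by
    intro k
    by_cases hk : k ≤ K
    · exact le_trans (min_le_right _ _)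
        (Finset.inf'_le _ (Finset.mem_range.2 (by omega)))
    · refine le_trans (min_le_left _ _) ?_
      have h1 : (K:ℝ) < (k:ℝ) := by exact_mod_cast (by omega : K < k)
      have h2 : ‖(k:ℂ)‖ ≤ ‖a + (k:ℂ)‖ + ‖a‖ := by
        calc ‖(k:ℂ)‖ = ‖(a + (k:ℂ)) + (-a)‖ := by ring_nf
          _ ≤ ‖a + (k:ℂ)‖ + ‖-a‖ := norm_add_le _ _
          _ = ‖a + (k:ℂ)‖ + ‖a‖ := by rw [norm_neg]
      have h3 : ‖(k:ℂ)‖ = (k:ℝ) := by simp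
      linarith
  refine ⟨c, hcpos, fun n => ?_⟩
  induction n with
  | zero => simp [poch_zero]
  | succ n ih =>
    rw [poch_succ, pow_succ, norm_mul]
    exact mul_le_mul ih (hstep n) hcpos.le (norm_nonneg _)

set_option maxHeartbeats 4000000 in
theorem stmt8 (Δ : ℕ → ℂ) (hΔ : ∃ C : ℝ, ∀ m : ℕ, ‖Δ m‖ ≤ C)
    (ρ : ℂ) (hρ : ∀ k : ℕ, ρ ≠ -(k : ℂ)) (hρ' : ∀ k : ℕ, 2 - ρ ≠ -(k : ℂ))
    (h1 : ∀ k : ℕ, (ρ + 1) / 2 ≠ -(k : ℂ)) (h2 : ∀ k : ℕ, (3 - ρ) / 2 ≠ -(k : ℂ))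
    (h3 : ∀ k : ℕ, ρ / 2 + 1 ≠ -(k : ℂ)) (h4 : ∀ k : ℕ, 2 - ρ / 2 ≠ -(k : ℂ))
    (x : ℂ) :
    ∑' (m : ℕ), ∑' (n : ℕ),
        (-1 : ℂ) ^ n * Δ (m + n) * x ^ (m + n) /
          (poch ρ m * poch (2 - ρ) n * m.factorial * n.factorial)
      = (∑' (m : ℕ), Δ (2 * m) * (-x ^ 2) ^ m /
            (poch (1 / 2) m * poch ((ρ + 1) / 2) m * poch ((3 - ρ) / 2) m *
              (4 : ℂ) ^ m * m.factorial))
        + (2 * (1 - ρ) * x / (ρ * (2 - ρ))) *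
          ∑' (m : ℕ), Δ (2 * m + 1) * (-x ^ 2) ^ m /
            (poch (3 / 2) m * poch (ρ / 2 + 1) m * poch (2 - ρ / 2) m *
              (4 : ℂ) ^ m * m.factorial) := by
  classical
  obtain ⟨C, hC⟩ := hΔ
  have hC0 : (0:ℝ) ≤ C := le_trans (norm_nonneg _) (hC 0)
  obtain ⟨c1, hc1, hp1⟩ := poch_norm_lb hρ
  obtain ⟨c2, hc2, hp2⟩ := poch_norm_lb hρ'
  set T : ℕ × ℕ → ℂ := fun p =>
    (-1 : ℂ) ^ p.2 * Δ (p.1 + p.2) * x ^ (p.1 + p.2) /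
      (poch ρ p.1 * poch (2 - ρ) p.2 * p.1.factorial * p.2.factorial) with hTdef
  -- summability of T
  have hbound : ∀ p : ℕ × ℕ,
      ‖T p‖ ≤ C * ((‖x‖/c1)^p.1 / p.1.factorial * ((‖x‖/c2)^p.2 / p.2.factorial)) := by
    rintro ⟨m, n⟩
    have hnorm : ‖T (m, n)‖
        = ‖Δ (m+n)‖ * ‖x‖^(m+n)
          / (‖poch ρ m‖ * ‖poch (2-ρ) n‖ * m.factorial * n.factorial) := by
      simp only [hTdef]
      rw [norm_div]
      congr 1
      · rw [norm_mul, norm_mul, norm_pow, norm_neg, norm_one, one_pow, one_mul, norm_pow]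
      · rw [norm_mul, norm_mul, norm_mul, Complex.norm_natCast, Complex.norm_natCast]
    rw [hnorm]
    have hb1 : ‖Δ (m+n)‖ * ‖x‖^(m+n) ≤ C * ‖x‖^(m+n) :=
      mul_le_mul_of_nonneg_right (hC _) (by positivity)
    have hb2 : c1^m * c2^n * (m.factorial:ℝ) * (n.factorial:ℝ)
        ≤ ‖poch ρ m‖ * ‖poch (2-ρ) n‖ * m.factorial * n.factorial := by
      apply mul_le_mul_of_nonneg_right ?_ (by positivity)
      apply mul_le_mul_of_nonneg_right ?_ (by positivity)
      exact mul_le_mul (hp1 m) (hp2 n) (by positivity) (norm_nonneg _)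
    have hb3 : (0:ℝ) < c1^m * c2^n * (m.factorial:ℝ) * (n.factorial:ℝ) := by positivity
    calc ‖Δ (m+n)‖ * ‖x‖^(m+n)
          / (‖poch ρ m‖ * ‖poch (2-ρ) n‖ * m.factorial * n.factorial)
        ≤ (C * ‖x‖^(m+n)) / (c1^m * c2^n * (m.factorial:ℝ) * (n.factorial:ℝ)) :=
          div_le_div₀ (by positivity) hb1 hb3 hb2
      _ = C * ((‖x‖/c1)^m / m.factorial * ((‖x‖/c2)^n / n.factorial)) := by
          have hfm : ((m.factorial:ℝ)) ≠ 0 := by positivity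
          have hfn : ((n.factorial:ℝ)) ≠ 0 := by positivity
          rw [div_pow, div_pow, pow_add]
          field_simp
  have hgsum : Summable (fun p : ℕ × ℕ =>
      C * ((‖x‖/c1)^p.1 / p.1.factorial * ((‖x‖/c2)^p.2 / p.2.factorial))) := by
    apply Summable.mul_left
    exact (Real.summable_pow_div_factorial _).mul_of_nonneg
      (Real.summable_pow_div_factorial _)
      (by intro m; positivity) (by intro n; positivity)
  have hTsum : Summable T := Summable.of_norm_bounded hgsum hbound
  -- rearrangement to diagonals
  have key3 : ∀ N : ℕ, ∑ p ∈ Finset.HasAntidiagonal.antidiagonal N, T p = Δ N * x^N * cdiag ρ N := by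
    intro N
    rw [cdiag, Finset.mul_sum]
    refine Finset.sum_congr rfl fun p hp => ?_
    have hpN : p.1 + p.2 = N := Finset.HasAntidiagonal.mem_antidiagonal.mp hp
    simp only [hTdef, tt, hpN]
    ring
  have hσsum : Summable (fun σ : Σ N : ℕ, Finset.HasAntidiagonal.antidiagonal N => T σ.2) :=
    Finset.HasAntidiagonal.sigmaAntidiagonalEquivProd.summable_iff.mpr hTsum
  have key2 : ∑' (p : ℕ × ℕ), T p = ∑' (N : ℕ), Δ N * x^N * cdiag ρ N := by
    rw [← Finset.HasAntidiagonal.sigmaAntidiagonalEquivProd.tsum_eq T]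
    simp only [Finset.HasAntidiagonal.sigmaAntidiagonalEquivProd_apply]
    rw [hσsum.tsum_sigma' (fun N => (hasSum_fintype _).summable)]
    exact tsum_congr fun N => by rw [Finset.tsum_subtype, key3]
  have hDsum : Summable (fun N => Δ N * x ^ N * cdiag ρ N) := by
    have h := hσsum.sigma' (fun N => (hasSum_fintype _).summable)
    exact h.congr fun N => by rw [Finset.tsum_subtype, key3]
  have key1 : ∑' (m : ℕ), ∑' (n : ℕ),
      (-1 : ℂ) ^ n * Δ (m + n) * x ^ (m + n) /
        (poch ρ m * poch (2 - ρ) n * m.factorial * n.factorial)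
      = ∑' (p : ℕ × ℕ), T p :=
    (hTsum.tsum_prod' (fun m => hTsum.prod_factor m)).symm
  have heven : Summable (fun k => Δ (2*k) * x^(2*k) * cdiag ρ (2*k)) :=
    hDsum.comp_injective (fun a b hab => by omega)
  have hodd : Summable (fun k => Δ (2*k+1) * x^(2*k+1) * cdiag ρ (2*k+1)) :=
    hDsum.comp_injective (fun a b hab => by omega)
  have hsplit := tsum_even_add_odd (f := fun N => Δ N * x^N * cdiag ρ N) heven hodd
  have hcf := closed_form ρ hρ hρ' h1 h2 h3 h4
  have hevenval : ∀ k : ℕ, Δ (2*k) * x^(2*k) * cdiag ρ (2*k)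
      = Δ (2 * k) * (-x ^ 2) ^ k /
          (poch (1 / 2) k * poch ((ρ + 1) / 2) k * poch ((3 - ρ) / 2) k *
            (4 : ℂ) ^ k * k.factorial) := by
    intro k
    rw [(hcf k).1, Eterm]
    have hx : (-x^2)^k = (-1:ℂ)^k * x^(2*k) := by rw [neg_pow, pow_mul]
    rw [hx]
    ring
  have hoddval : ∀ k : ℕ, Δ (2*k+1) * x^(2*k+1) * cdiag ρ (2*k+1)
      = (2 * (1 - ρ) * x / (ρ * (2 - ρ))) *
          (Δ (2 * k + 1) * (-x ^ 2) ^ k /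
            (poch (3 / 2) k * poch (ρ / 2 + 1) k * poch (2 - ρ / 2) k *
              (4 : ℂ) ^ k * k.factorial)) := by
    intro k
    rw [(hcf k).2, Oterm]
    have hx : (-x^2)^k = (-1:ℂ)^k * x^(2*k) := by rw [neg_pow, pow_mul]
    rw [hx, pow_succ]
    ring
  calc ∑' (m : ℕ), ∑' (n : ℕ),
        (-1 : ℂ) ^ n * Δ (m + n) * x ^ (m + n) /
          (poch ρ m * poch (2 - ρ) n * m.factorial * n.factorial)
      = ∑' (N : ℕ), Δ N * x^N * cdiag ρ N := key1.trans key2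
    _ = (∑' k, Δ (2*k) * x^(2*k) * cdiag ρ (2*k))
        + ∑' k, Δ (2*k+1) * x^(2*k+1) * cdiag ρ (2*k+1) := hsplit.symm
    _ = (∑' (m : ℕ), Δ (2 * m) * (-x ^ 2) ^ m /
            (poch (1 / 2) m * poch ((ρ + 1) / 2) m * poch ((3 - ρ) / 2) m *
              (4 : ℂ) ^ m * m.factorial))
        + (2 * (1 - ρ) * x / (ρ * (2 - ρ))) *
          ∑' (m : ℕ), Δ (2 * m + 1) * (-x ^ 2) ^ m /
            (poch (3 / 2) m * poch (ρ / 2 + 1) m * poch (2 - ρ / 2) m *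
              (4 : ℂ) ^ m * m.factorial) := by
        rw [tsum_congr hevenval, tsum_congr hoddval, tsum_mul_left]
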